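/- arXiv:1910.03847 — 2 statements merged into one kernel-verified Lean document; each statement's English description precedes it below -/
import Mathlib

section
/- Let X be a real Banach space and φ : X → (-∞, +∞] a proper convex lower semicontinuous function. Then the graph of ∂φ is nonempty, i.e., ∂φ is a proper point-to-set operator. -/
open ENNReal Filter Topology Set


noncomputable section

variable {X : Type*} [NormedAddCommGroup X] [NormedSpace ℝ X] [CompleteSpace X]

/-- The subdifferential of an extended-real-valued function `φ : X → (-∞,+∞]`,
viewed as a subset of `X × X*`: `(x, x*) ∈ ∂φ` iff `⟨y - x, x*⟩ + φ(x) ≤ φ(y)` for all `y`. -/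
def subdiff (φ : X → EReal) : Set (X × (X →L[ℝ] ℝ)) :=
  {p | ∀ y : X, ((p.2 (y - p.1) : ℝ) : EReal) + φ p.1 ≤ φ y}

/-- Convexity for extended-real-valued functions. -/
def ERealConvexOn {E : Type*} [AddCommGroup E] [Module ℝ E] (φ : E → EReal) : Prop :=
  ∀ x y : E, ∀ a b : ℝ, 0 ≤ a → 0 ≤ b → a + b = 1 →
    φ (a • x + b • y) ≤ (a : EReal) * φ x + (b : EReal) * φ y

/-- A function `X → (-∞,+∞]` is proper: it never takes the value `-∞` and is
finite somewhere. -/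
def ProperFn {E : Type*} (φ : E → EReal) : Prop :=
  (∀ x, φ x ≠ ⊥) ∧ (∃ x, φ x ≠ ⊤)

/-- The duality mapping `J_X(x) = {x* : ⟨x, x*⟩ = ‖x‖² = ‖x*‖²}`. -/
def dualityMap (x : X) : Set (X →L[ℝ] ℝ) :=
  {x' | x' x = ‖x‖ ^ 2 ∧ ‖x‖ ^ 2 = ‖x'‖ ^ 2}

/-- A monotone subset of `X × X*`. -/
def MonotoneSet (A : Set (X × (X →L[ℝ] ℝ))) : Prop :=
  ∀ p ∈ A, ∀ q ∈ A, 0 ≤ (p.2 - q.2) (p.1 - q.1)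

/-- A maximal monotone subset of `X × X*`. -/
def MaximalMonotoneSet (A : Set (X × (X →L[ℝ] ℝ))) : Prop :=
  MonotoneSet A ∧
    ∀ p : X × (X →L[ℝ] ℝ), (∀ q ∈ A, 0 ≤ (p.2 - q.2) (p.1 - q.1)) → p ∈ A

/-- The Fitzpatrick function of an operator `A : X ⇉ X*`:
`H_A(x, x*) = sup {⟨u, x*⟩ + ⟨x, u*⟩ - ⟨u, u*⟩ : (u, u*) ∈ A}`. -/
def fitz (A : Set (X × (X →L[ℝ] ℝ))) (p : X × (X →L[ℝ] ℝ)) : EReal :=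
  ⨆ q ∈ A, ((p.2 q.1 + q.2 p.1 - q.2 q.1 : ℝ) : EReal)

/-- `(x*, x) ∈ ∂H_A(u, u*)`, the subdifferential of the Fitzpatrick function at `(u, u*)`
with the pairing `⟨(x*, x), (z, z*)⟩ = ⟨z, x*⟩ + ⟨x, z*⟩`:
`⟨z - u, x*⟩ + ⟨x, z* - u*⟩ + H(u, u*) ≤ H(z, z*)` for all `(z, z*)`. -/
def inSubdiffFitz (A : Set (X × (X →L[ℝ] ℝ))) (u : X) (u' : X →L[ℝ] ℝ)
    (x' : X →L[ℝ] ℝ) (x : X) : Prop :=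
  ∀ z : X, ∀ z' : X →L[ℝ] ℝ,
    ((x' (z - u) + (z' - u') x : ℝ) : EReal) + fitz A (u, u') ≤ fitz A (z, z')

/- ### auxiliary lemmas -/

lemma aux_exists_real_btwn {a : ℝ} {z : EReal} (h : (a : EReal) < z) :
    ∃ t : ℝ, a < t ∧ (t : EReal) < z := by
  obtain ⟨w, hw1, hw2⟩ := exists_between h
  have hwt : w ≠ ⊤ := (lt_of_lt_of_le hw2 le_top).ne
  have hwb : w ≠ ⊥ := (bot_lt_iff_ne_bot.2 (by simp)).trans hw1 |>.ne'
  refine ⟨w.toReal, ?_, ?_⟩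
  · exact_mod_cast (EReal.coe_toReal hwt hwb) ▸ hw1
  · exact (EReal.coe_toReal hwt hwb).symm ▸ hw2

lemma aux_decomp (f : (X × ℝ) →L[ℝ] ℝ) (x : X) (r : ℝ) :
    f (x, r) = f (x, 0) + f (0, 1) * r := by
  have h : (x, r) = (x, 0) + r • ((0 : X), (1 : ℝ)) := by
    simp [Prod.ext_iff]
  rw [h, map_add, map_smul, smul_eq_mul]; ring

lemma aux_epi_closed (φ : X → EReal) (hlsc : LowerSemicontinuous φ) :
    IsClosed {p : X × ℝ | φ p.1 ≤ (p.2 : EReal)} := by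
  have h1 : Continuous (fun p : X × ℝ => ((p.1, (p.2 : EReal)) : X × EReal)) :=
    continuous_fst.prodMk (continuous_coe_real_ereal.comp continuous_snd)
  exact IsClosed.preimage h1 hlsc.isClosed_epigraph

lemma aux_epi_convex (φ : X → EReal) (hproper : ProperFn φ) (hconv : ERealConvexOn φ) :
    Convex ℝ {p : X × ℝ | φ p.1 ≤ (p.2 : EReal)} := by
  intro p hp q hq a b ha hb hab
  simp only [mem_setOf_eq] at hp hq ⊢
  have hpt : φ p.1 ≠ ⊤ := fun h => by simp [h] at hp
  have hqt : φ q.1 ≠ ⊤ := fun h => by simp [h] at hq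
  set u := (φ p.1).toReal with hu
  set v := (φ q.1).toReal with hv
  have hpu : φ p.1 = (u : EReal) := (EReal.coe_toReal hpt (hproper.1 p.1)).symm
  have hqv : φ q.1 = (v : EReal) := (EReal.coe_toReal hqt (hproper.1 q.1)).symm
  have hup : u ≤ p.2 := by rwa [hpu, EReal.coe_le_coe_iff] at hp
  have hvq : v ≤ q.2 := by rwa [hqv, EReal.coe_le_coe_iff] at hq
  have h := hconv p.1 q.1 a b ha hb hab
  rw [hpu, hqv] at h
  have h2 : (a : EReal) * (u : EReal) + (b : EReal) * (v : EReal)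
      = ((a * u + b * v : ℝ) : EReal) := by
    rw [← EReal.coe_mul, ← EReal.coe_mul, ← EReal.coe_add]
  have h3 : (a • p + b • q).1 = a • p.1 + b • q.1 := rfl
  have h4 : (a • p + b • q).2 = a * p.2 + b * q.2 := rfl
  rw [h3, h4]
  refine le_trans (h.trans_eq h2) ?_
  rw [EReal.coe_le_coe_iff]
  have := mul_le_mul_of_nonneg_left hup ha
  have := mul_le_mul_of_nonneg_left hvq hb
  linarith

/-- Existence of a continuous affine minorant. -/
lemma aux_minorant (φ : X → EReal) (hproper : ProperFn φ)
    (hconv : ERealConvexOn φ) (hlsc : LowerSemicontinuous φ) :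
    ∃ (L : X →L[ℝ] ℝ) (c : ℝ), ∀ x, ((L x + c : ℝ) : EReal) ≤ φ x := by
  obtain ⟨x₀, hx₀⟩ := hproper.2
  set r₀ := (φ x₀).toReal with hr₀
  have hφx₀ : φ x₀ = (r₀ : EReal) := (EReal.coe_toReal hx₀ (hproper.1 x₀)).symm
  set E := {p : X × ℝ | φ p.1 ≤ (p.2 : EReal)} with hE
  have hnot : ((x₀, r₀ - 1) : X × ℝ) ∉ E := by
    simp only [hE, mem_setOf_eq, hφx₀, EReal.coe_le_coe_iff]
    linarith
  obtain ⟨f, u, hfu, hfE⟩ := geometric_hahn_banach_point_closed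
    (aux_epi_convex φ hproper hconv) (aux_epi_closed φ hlsc) hnot
  set g : X →L[ℝ] ℝ := f.comp (ContinuousLinearMap.inl ℝ X ℝ) with hg
  set α := f (0, 1) with hα
  have hdec : ∀ (x : X) (r : ℝ), f (x, r) = g x + α * r := by
    intro x r
    rw [aux_decomp f x r]; rfl
  have h1 : u < g x₀ + α * r₀ := by
    have := hfE (x₀, r₀) (by simp [hE, hφx₀])
    rwa [hdec] at this
  have h2 : g x₀ + α * (r₀ - 1) < u := by rwa [hdec] at hfu
  have hαpos : 0 < α := by nlinarith
  refine ⟨(-α⁻¹) • g, α⁻¹ * u, fun x => ?_⟩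
  by_cases hxt : φ x = ⊤
  · rw [hxt]; exact le_top
  · set p := (φ x).toReal with hp
    have hφx : φ x = (p : EReal) := (EReal.coe_toReal hxt (hproper.1 x)).symm
    have hmem : ((x, p) : X × ℝ) ∈ E := by simp [hE, hφx]
    have := hfE _ hmem
    rw [hdec] at this
    rw [hφx, EReal.coe_le_coe_iff]
    have hinv : α⁻¹ * α = 1 := inv_mul_cancel₀ hαpos.ne'
    have h3 := mul_le_mul_of_nonneg_left this.le (inv_nonneg.2 hαpos.le)
    have e1 : α⁻¹ * (g x + α * p) = α⁻¹ * g x + p := by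
      rw [mul_add, ← mul_assoc, hinv, one_mul]
    rw [e1] at h3
    simp only [ContinuousLinearMap.coe_smul', Pi.smul_apply, smul_eq_mul]
    linarith

/-- Ekeland's variational principle, ℝ≥0∞-valued version (ε = 1). -/
lemma aux_ekeland {α : Type*} [MetricSpace α] [CompleteSpace α] {ψ : α → ℝ≥0∞}
    (hlsc : LowerSemicontinuous ψ) {x₀ : α} (h0 : ψ x₀ ≠ ⊤) :
    ∃ z : α, ψ z ≤ ψ x₀ ∧ ∀ x, ψ z ≤ ψ x + edist x z := by
  classical
  set S : α → Set α := fun u => {x | ψ x + edist x u ≤ ψ u} with hS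
  have mem_self : ∀ u, u ∈ S u := fun u => by simp [hS]
  have Sclosed : ∀ u, IsClosed (S u) := by
    intro u
    have : LowerSemicontinuous (fun x => ψ x + edist x u) :=
      hlsc.add ((continuous_id.edist continuous_const).lowerSemicontinuous)
    exact this.isClosed_preimage (ψ u)
  have Strans : ∀ u v w, v ∈ S u → w ∈ S v → w ∈ S u := by
    intro u v w hv hw
    have : ψ w + edist w u ≤ (ψ w + edist w v) + edist v u := by
      rw [add_assoc]
      exact add_le_add_right (edist_triangle _ _ _) _
    exact le_trans (le_trans this (add_le_add_left hw _)) hv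
  have ex : ∀ (n : ℕ) (u : α), ∃ v, v ∈ S u ∧ ψ v ≤ (⨅ x : S u, ψ (x : α)) + 2⁻¹ ^ n := by
    intro n u
    by_cases hi : (⨅ x : S u, ψ (x : α)) = ⊤
    · exact ⟨u, mem_self u, by simp [hi]⟩
    · have : (⨅ x : S u, ψ (x : α)) < (⨅ x : S u, ψ (x : α)) + 2⁻¹ ^ n :=
        ENNReal.lt_add_right hi (by simp)
      obtain ⟨⟨v, hv⟩, hlt⟩ := iInf_lt_iff.1 this
      exact ⟨v, hv, hlt.le⟩
  set step : ℕ → α → α := fun n u => Classical.choose (ex n u) with hstep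
  have step_spec : ∀ n u, step n u ∈ S u ∧
      ψ (step n u) ≤ (⨅ x : S u, ψ (x : α)) + 2⁻¹ ^ n := fun n u => Classical.choose_spec (ex n u)
  set seq : ℕ → α := fun n => Nat.rec x₀ (fun k u => step k u) n with hseq
  have seq0 : seq 0 = x₀ := rfl
  have seqS : ∀ n, seq (n + 1) ∈ S (seq n) := fun n => (step_spec n (seq n)).1
  have seq_inf : ∀ n, ψ (seq (n + 1)) ≤ (⨅ x : S (seq n), ψ (x : α)) + 2⁻¹ ^ n :=
    fun n => (step_spec n (seq n)).2
  have seq_mono : ∀ n, ψ (seq (n + 1)) + edist (seq (n + 1)) (seq n) ≤ ψ (seq n) := seqS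
  have partial_bound : ∀ N,
      (∑ n ∈ Finset.range N, edist (seq (n + 1)) (seq n)) + ψ (seq N) ≤ ψ x₀ := by
    intro N
    induction N with
    | zero => simp [seq0]
    | succ N ih =>
      rw [Finset.sum_range_succ]
      calc (∑ n ∈ Finset.range N, edist (seq (n + 1)) (seq n)) + edist (seq (N + 1)) (seq N)
            + ψ (seq (N + 1))
          = (∑ n ∈ Finset.range N, edist (seq (n + 1)) (seq n))
            + (ψ (seq (N + 1)) + edist (seq (N + 1)) (seq N)) := by ring
        _ ≤ (∑ n ∈ Finset.range N, edist (seq (n + 1)) (seq n)) + ψ (seq N) :=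
            add_le_add_right (seq_mono N) _
        _ ≤ ψ x₀ := ih
  have tsum_ne : (∑' n, edist (seq (n + 1)) (seq n)) ≠ ⊤ := by
    rw [ENNReal.tsum_eq_iSup_sum]
    refine (ne_top_of_le_ne_top h0 (iSup_le fun s => ?_))
    obtain ⟨N, hN⟩ := s.exists_nat_subset_range
    exact le_trans (Finset.sum_le_sum_of_subset hN)
      (le_trans le_self_add (partial_bound N))
  have cauchy : CauchySeq seq := by
    refine cauchySeq_of_edist_le_of_tsum_ne_top (fun n => edist (seq (n + 1)) (seq n))
      (fun n => ?_) tsum_ne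
    rw [edist_comm]
  obtain ⟨z, hz⟩ := cauchySeq_tendsto_of_complete cauchy
  have seqS' : ∀ n m, n ≤ m → seq m ∈ S (seq n) := by
    intro n m hnm
    induction m with
    | zero => simp_all [Nat.le_zero.1 hnm, mem_self]
    | succ m ih =>
      rcases Nat.lt_or_ge n (m + 1) with h | h
      · exact Strans _ _ _ (ih (Nat.lt_succ_iff.1 h)) (seqS m)
      · have : n = m + 1 := le_antisymm hnm h
        subst this; exact mem_self _
  have zS : ∀ n, z ∈ S (seq n) := by
    intro n
    exact (Sclosed (seq n)).mem_of_tendsto hz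
      (eventually_atTop.2 ⟨n, fun m hm => seqS' n m hm⟩)
  have hz_le : ∀ n, ψ z ≤ ψ (seq n) := by
    intro n
    exact le_trans le_self_add (zS n)
  refine ⟨z, by simpa [seq0] using hz_le 0, ?_⟩
  intro x
  by_contra hx
  push_neg at hx
  have xS : ∀ n, x ∈ S (seq n) := by
    intro n
    have h1 : ψ x + edist x (seq n) ≤ (ψ x + edist x z) + edist z (seq n) := by
      rw [add_assoc]; exact add_le_add_right (edist_triangle _ _ _) _
    have h2 : (ψ x + edist x z) + edist z (seq n) ≤ ψ z + edist z (seq n) :=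
      add_le_add_left hx.le _
    exact le_trans h1 (le_trans h2 (zS n))
  have key : ∀ n : ℕ, ψ z ≤ ψ x + 2⁻¹ ^ n := by
    intro n
    calc ψ z ≤ ψ (seq (n + 1)) := hz_le (n + 1)
      _ ≤ (⨅ y : S (seq n), ψ (y : α)) + 2⁻¹ ^ n := seq_inf n
      _ ≤ ψ x + 2⁻¹ ^ n := add_le_add_left (iInf_le_of_le (i := (⟨x, xS n⟩ : S (seq n))) le_rfl) _
  have hzx : ψ z ≤ ψ x := by
    have hpow : Tendsto (fun n : ℕ => ψ x + 2⁻¹ ^ n) atTop (𝓝 (ψ x)) := by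
      have h2 : Tendsto (fun n : ℕ => (2⁻¹ : ℝ≥0∞) ^ n) atTop (𝓝 0) :=
        ENNReal.tendsto_pow_atTop_nhds_zero_of_lt_one (by norm_num)
      simpa using tendsto_const_nhds.add h2
    exact ge_of_tendsto' hpow key
  exact absurd (lt_of_lt_of_le hx (le_trans hzx le_self_add)) (lt_irrefl _)

/-- the subdifferential of a proper convex l.s.c. function has nonempty graph. -/
theorem subdiff_nonempty (φ : X → EReal) (hproper : ProperFn φ)
    (hconv : ERealConvexOn φ) (hlsc : LowerSemicontinuous φ) :
    (subdiff φ).Nonempty := by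
  classical
  obtain ⟨L, c, hmin⟩ := aux_minorant φ hproper hconv hlsc
  set l : X → ℝ := fun x => L x + c with hl
  have hlcont : Continuous l := L.continuous.add continuous_const
  have hminl : ∀ x (p : ℝ), φ x = (p : EReal) → l x ≤ p := by
    intro x p hp
    have := hmin x
    rwa [hp, EReal.coe_le_coe_iff] at this
  set ψ : X → ℝ≥0∞ := fun x => if φ x = ⊤ then ⊤ else ENNReal.ofReal ((φ x).toReal - l x)
    with hψ
  have hψlsc : LowerSemicontinuous ψ := by
    intro x y hy
    have hyt : y ≠ ⊤ := (lt_of_lt_of_le hy le_top).ne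
    set t := y.toReal with ht
    have ht0 : 0 ≤ t := ENNReal.toReal_nonneg
    have hA : ((t + l x : ℝ) : EReal) < φ x := by
      by_cases hxt : φ x = ⊤
      · rw [hxt]; exact EReal.coe_lt_top _
      · set p := (φ x).toReal with hp
        have hφx : φ x = (p : EReal) := (EReal.coe_toReal hxt (hproper.1 x)).symm
        have hy' : y < ENNReal.ofReal (p - l x) := by
          rw [hψ] at hy; simpa [hxt, hp] using hy
        have := (ENNReal.lt_ofReal_iff_toReal_lt hyt).1 hy'
        rw [hφx, EReal.coe_lt_coe_iff]
        linarith
    obtain ⟨t', ht'1, ht'2⟩ := aux_exists_real_btwn hA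
    have E1 : ∀ᶠ x' in 𝓝 x, (t' : EReal) < φ x' := hlsc x (t' : EReal) ht'2
    have E2 : ∀ᶠ x' in 𝓝 x, t + l x' < t' := by
      have hopen : IsOpen {x' : X | t + l x' < t'} :=
        isOpen_lt (continuous_const.add hlcont) continuous_const
      exact hopen.mem_nhds (by simpa using ht'1)
    filter_upwards [E1, E2] with x' h1 h2
    by_cases hxt : φ x' = ⊤
    · rw [hψ]; simp only [hxt, if_true]
      exact lt_top_iff_ne_top.2 hyt
    · set p' := (φ x').toReal with hp'
      have hφx' : φ x' = (p' : EReal) := (EReal.coe_toReal hxt (hproper.1 x')).symm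
      rw [hφx', EReal.coe_lt_coe_iff] at h1
      have hty : y = ENNReal.ofReal t := by
        rw [ht, ENNReal.ofReal_toReal hyt]
      rw [hψ]; simp only [hxt, if_false, ← hp']
      rw [hty]
      exact (ENNReal.ofReal_lt_ofReal_iff (by linarith)).2 (by linarith)
  obtain ⟨x₀, hx₀⟩ := hproper.2
  have hψ0 : ψ x₀ ≠ ⊤ := by
    rw [hψ]; simp only [hx₀, if_false]; exact ENNReal.ofReal_ne_top
  obtain ⟨z, hz1, hz2⟩ := aux_ekeland hψlsc hψ0
  have hφzt : φ z ≠ ⊤ := by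
    intro h
    apply hψ0
    have : ψ z = ⊤ := by rw [hψ]; simp [h]
    exact top_le_iff.1 (this ▸ hz1)
  set pz := (φ z).toReal with hpz
  have hφz : φ z = (pz : EReal) := (EReal.coe_toReal hφzt (hproper.1 z)).symm
  set m := pz - l z with hm
  have hm0 : 0 ≤ m := by
    have := hminl z pz hφz; linarith
  have hψz : ψ z = ENNReal.ofReal m := by
    rw [hψ]; simp [hφzt, hm, hpz]
  -- key real inequality from Ekeland
  have key : ∀ x, ((l x + m - ‖x - z‖ : ℝ) : EReal) ≤ φ x := by
    intro x
    by_cases hxt : φ x = ⊤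
    · rw [hxt]; exact le_top
    · set p := (φ x).toReal with hp
      have hφx : φ x = (p : EReal) := (EReal.coe_toReal hxt (hproper.1 x)).symm
      have hlp : l x ≤ p := hminl x p hφx
      have h := hz2 x
      rw [hψz] at h
      have hψx : ψ x = ENNReal.ofReal (p - l x) := by
        rw [hψ]; simp [hxt, hp]
      rw [hψx, edist_dist, dist_eq_norm,
        ← ENNReal.ofReal_add (by linarith) (norm_nonneg _)] at h
      have := (ENNReal.ofReal_le_ofReal_iff (by linarith [norm_nonneg (x - z)])).1 h
      rw [hφx, EReal.coe_le_coe_iff]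
      linarith
  -- second separation
  set A := {p : X × ℝ | φ p.1 ≤ (p.2 : EReal)} with hA
  set B := {p : X × ℝ | p.2 < l p.1 + m - ‖p.1 - z‖} with hB
  have hBopen : IsOpen B := by
    apply isOpen_lt continuous_snd
    exact ((hlcont.comp continuous_fst).add continuous_const).sub
      ((continuous_fst.sub continuous_const).norm)
  have hBconv : Convex ℝ B := by
    intro p hp q hq a b ha hb hab
    simp only [hB, mem_setOf_eq] at hp hq ⊢
    have h3 : (a • p + b • q).1 = a • p.1 + b • q.1 := rfl
    have h4 : (a • p + b • q).2 = a * p.2 + b * q.2 := rfl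
    rw [h3, h4]
    have hnorm : ‖a • p.1 + b • q.1 - z‖ ≤ a * ‖p.1 - z‖ + b * ‖q.1 - z‖ := by
      have he : a • p.1 + b • q.1 - z = a • (p.1 - z) + b • (q.1 - z) := by
        rw [smul_sub, smul_sub]
        rw [show a • p.1 - a • z + (b • q.1 - b • z)
            = a • p.1 + b • q.1 - (a • z + b • z) by abel]
        rw [← add_smul, hab, one_smul]
      rw [he]
      calc ‖a • (p.1 - z) + b • (q.1 - z)‖ ≤ ‖a • (p.1 - z)‖ + ‖b • (q.1 - z)‖ :=
            norm_add_le _ _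
        _ = a * ‖p.1 - z‖ + b * ‖q.1 - z‖ := by
            rw [norm_smul, norm_smul, Real.norm_eq_abs, Real.norm_eq_abs,
              abs_of_nonneg ha, abs_of_nonneg hb]
    have hlin : l (a • p.1 + b • q.1) = a * l p.1 + b * l q.1 := by
      simp only [hl, map_add, map_smul, smul_eq_mul]
      have hc : a * c + b * c = c := by
        have h9 : a * c + b * c = (a + b) * c := by ring
        rw [h9, hab, one_mul]
      linarith
    rw [hlin]
    have hm' : a * m + b * m = m := by
      have : a * m + b * m = (a + b) * m := by ring
      rw [this, hab, one_mul]
    rcases eq_or_lt_of_le ha with ha0 | ha'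
    · have hb' : 0 < b := by linarith
      have h5 : a * p.2 = a * (l p.1 + m - ‖p.1 - z‖) := by rw [← ha0]; ring
      have h6 : b * q.2 < b * (l q.1 + m - ‖q.1 - z‖) := mul_lt_mul_of_pos_left hq hb'
      nlinarith [hnorm]
    · have h5 : a * p.2 < a * (l p.1 + m - ‖p.1 - z‖) := mul_lt_mul_of_pos_left hp ha'
      have h6 : b * q.2 ≤ b * (l q.1 + m - ‖q.1 - z‖) := mul_le_mul_of_nonneg_left hq.le hb
      nlinarith [hnorm]
  have hdisj : Disjoint B A := by
    rw [Set.disjoint_left]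
    intro p hpB hpA
    simp only [hB, mem_setOf_eq] at hpB
    simp only [hA, mem_setOf_eq] at hpA
    have h1 : ((p.2 : ℝ) : EReal) < ((l p.1 + m - ‖p.1 - z‖ : ℝ) : EReal) :=
      EReal.coe_lt_coe_iff.2 hpB
    exact absurd ((h1.trans_le (key p.1)).trans_le hpA) (lt_irrefl _)
  obtain ⟨f, u, hfB, hfA⟩ := geometric_hahn_banach_open hBconv hBopen
    (aux_epi_convex φ hproper hconv) hdisj
  set g : X →L[ℝ] ℝ := f.comp (ContinuousLinearMap.inl ℝ X ℝ) with hg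
  set α := f (0, 1) with hα
  have hdec : ∀ (x : X) (r : ℝ), f (x, r) = g x + α * r := by
    intro x r
    rw [aux_decomp f x r]; rfl
  have hpzlm : pz = l z + m := by rw [hm]; ring
  have hzA : ((z, pz) : X × ℝ) ∈ A := by simp [hA, hφz]
  have hstar : u ≤ g z + α * pz := by
    have := hfA _ hzA; rwa [hdec] at this
  have hBz : ∀ t : ℝ, 0 < t → g z + α * (pz - t) < u := by
    intro t ht
    have hmem : ((z, pz - t) : X × ℝ) ∈ B := by
      simp only [hB, mem_setOf_eq, sub_self, norm_zero]
      rw [hpzlm]; linarith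
    have := hfB _ hmem; rwa [hdec] at this
  have hαpos : 0 < α := by
    have := hBz 1 one_pos
    nlinarith
  have hle : g z + α * pz ≤ u := by
    by_contra hlt
    push_neg at hlt
    have ht : 0 < (g z + α * pz - u) / α := div_pos (by linarith) hαpos
    have := hBz _ ht
    rw [mul_sub, mul_div_cancel₀ _ hαpos.ne'] at this
    linarith
  have heq : u = g z + α * pz := le_antisymm hstar hle
  set β := α⁻¹ with hβ
  have hβpos : 0 < β := inv_pos.2 hαpos
  have hβα : β * α = 1 := inv_mul_cancel₀ hαpos.ne'
  refine ⟨(z, (-β) • g), ?_⟩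
  intro y
  show (((((-β) • g : X →L[ℝ] ℝ) (y - z)) : ℝ) : EReal) + φ z ≤ φ y
  have happ : ((-β) • g : X →L[ℝ] ℝ) (y - z) = -β * (g y - g z) := by
    rw [map_sub]
    simp only [ContinuousLinearMap.coe_smul', Pi.smul_apply, smul_eq_mul]
    ring
  rw [happ, hφz, ← EReal.coe_add]
  by_cases hyt : φ y = ⊤
  · rw [hyt]; exact le_top
  · set py := (φ y).toReal with hpy
    have hφy : φ y = (py : EReal) := (EReal.coe_toReal hyt (hproper.1 y)).symm
    have hyA : ((y, py) : X × ℝ) ∈ A := by simp [hA, hφy]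
    have h := hfA _ hyA
    rw [hdec] at h
    have h' : g z + α * pz ≤ g y + α * py := heq ▸ h
    rw [hφy, EReal.coe_le_coe_iff]
    have h2 := mul_le_mul_of_nonneg_left h' hβpos.le
    have e1 : β * (g z + α * pz) = β * g z + pz := by
      rw [mul_add, ← mul_assoc, hβα, one_mul]
    have e2 : β * (g y + α * py) = β * g y + py := by
      rw [mul_add, ← mul_assoc, hβα, one_mul]
    rw [e1, e2] at h2
    linarith
end
end

section
/- Let X be a real Banach space and φ : X → (-∞, +∞] proper convex lower semicontinuous. Then for all λ > 0, the closure of the range of J_X + λ∂φ equals X*, i.e., for every z* ∈ X* and every ε > 0 there exist x ∈ X, y* ∈ J_X(x), x* ∈ ∂φ(x) with ‖z* - (y* + λx*)‖ ≤ ε. -/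
noncomputable section

variable {X : Type*} [NormedAddCommGroup X] [NormedSpace ℝ X] [CompleteSpace X]

section EkelandSandwich

variable {X : Type*} [NormedAddCommGroup X] [NormedSpace ℝ X]

/-- Convexity of `t ↦ ‖t‖ ^ 2` as an explicit inequality. -/
theorem normsq_cvx (x y : X) (a b : ℝ) (ha : 0 ≤ a) (hb : 0 ≤ b) (hab : a + b = 1) :
    ‖a • x + b • y‖ ^ 2 ≤ a * ‖x‖ ^ 2 + b * ‖y‖ ^ 2 := by
  have h1 : ‖a • x + b • y‖ ≤ a * ‖x‖ + b * ‖y‖ := by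
    calc ‖a • x + b • y‖ ≤ ‖a • x‖ + ‖b • y‖ := norm_add_le _ _
      _ = a * ‖x‖ + b * ‖y‖ := by
          rw [norm_smul, norm_smul, Real.norm_eq_abs, Real.norm_eq_abs,
            abs_of_nonneg ha, abs_of_nonneg hb]
  nlinarith [norm_nonneg (a • x + b • y), norm_nonneg x, norm_nonneg y,
    mul_nonneg (mul_nonneg ha hb) (sq_nonneg (‖x‖ - ‖y‖))]

/-- Subadditivity of `t ↦ ‖t - v‖` as an explicit inequality. -/
theorem normsub_cvx (v x y : X) (a b : ℝ) (ha : 0 ≤ a) (hb : 0 ≤ b) (hab : a + b = 1) :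
    ‖(a • x + b • y) - v‖ ≤ a * ‖x - v‖ + b * ‖y - v‖ := by
  have h0 : (a • x + b • y) - v = a • (x - v) + b • (y - v) := by
    rw [smul_sub, smul_sub]
    rw [show a • x - a • v + (b • y - b • v) = a • x + b • y - (a • v + b • v) by abel]
    congr 1
    rw [← add_smul, hab, one_smul]
  rw [h0]
  calc ‖a • (x - v) + b • (y - v)‖ ≤ ‖a • (x - v)‖ + ‖b • (y - v)‖ := norm_add_le _ _
    _ = a * ‖x - v‖ + b * ‖y - v‖ := by
        rw [norm_smul, norm_smul, Real.norm_eq_abs, Real.norm_eq_abs,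
          abs_of_nonneg ha, abs_of_nonneg hb]

/-- Ekeland's variational principle for real-valued lsc functions, global form. -/
theorem my_ekeland [CompleteSpace X] {g : X → ℝ} (hg : LowerSemicontinuous g) {m : ℝ}
    (hm : ∀ y, m ≤ g y) {δ : ℝ} (hδ : 0 < δ) (x₀ : X) :
    ∃ v, g v ≤ g x₀ ∧ ∀ y, g v ≤ g y + δ * dist v y := by
  -- the "descent" set
  set S : X → Set X := fun x => {z | g z + δ * dist x z ≤ g x} with hS
  have hxS : ∀ x, x ∈ S x := by intro x; simp [hS]
  have key : ∀ x : X, ∃ y, y ∈ S x ∧ ∀ z ∈ S x, 2 * g y ≤ g z + g x := by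
    intro x
    have hne : (g '' S x).Nonempty := ⟨g x, x, hxS x, rfl⟩
    have hbdd : BddBelow (g '' S x) := ⟨m, by rintro _ ⟨z, _, rfl⟩; exact hm z⟩
    set i := sInf (g '' S x) with hi
    have hile : i ≤ g x := csInf_le hbdd ⟨x, hxS x, rfl⟩
    rcases eq_or_lt_of_le hile with heq | hlt
    · exact ⟨x, hxS x, fun z hz => by
        have : i ≤ g z := csInf_le hbdd ⟨z, hz, rfl⟩
        linarith⟩
    · have : i < (i + g x) / 2 := by linarith
      obtain ⟨_, ⟨y, hy, rfl⟩, hy2⟩ := exists_lt_of_csInf_lt hne this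
      exact ⟨y, hy, fun z hz => by
        have : i ≤ g z := csInf_le hbdd ⟨z, hz, rfl⟩
        linarith⟩
  choose nxt hnxt1 hnxt2 using key
  set x : ℕ → X := fun n => Nat.rec x₀ (fun _ p => nxt p) n with hx
  have hxsucc : ∀ n, x (n + 1) = nxt (x n) := fun n => rfl
  have P1 : ∀ n, g (x (n + 1)) + δ * dist (x n) (x (n + 1)) ≤ g (x n) := by
    intro n; rw [hxsucc]; exact hnxt1 (x n)
  have P2 : ∀ n, ∀ z ∈ S (x n), 2 * g (x (n + 1)) ≤ g z + g (x n) := by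
    intro n; rw [hxsucc]; exact hnxt2 (x n)
  have ganti : ∀ n, g (x (n + 1)) ≤ g (x n) := by
    intro n
    have := P1 n
    have := mul_nonneg hδ.le (dist_nonneg : (0:ℝ) ≤ dist (x n) (x (n+1)))
    linarith
  have ganti' : Antitone fun n => g (x n) :=
    antitone_nat_of_succ_le ganti
  -- telescoping distance bound
  have tele : ∀ n k, δ * dist (x n) (x (n + k)) ≤ g (x n) - g (x (n + k)) := by
    intro n k
    induction k with
    | zero => simp
    | succ k ih =>
      show δ * dist (x n) (x (n + k + 1)) ≤ g (x n) - g (x (n + k + 1))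
      have h1 := P1 (n + k)
      have h2 : dist (x n) (x (n + k + 1)) ≤ dist (x n) (x (n + k)) + dist (x (n+k)) (x (n+k+1)) :=
        dist_triangle _ _ _
      have h3 := mul_le_mul_of_nonneg_left h2 hδ.le
      have ih' : δ * dist (x n) (x (n + k)) ≤ g (x n) - g (x (n + k)) := ih
      nlinarith [h1, ih', h3]
  have tele' : ∀ n p, n ≤ p → δ * dist (x n) (x p) ≤ g (x n) - g (x p) := by
    intro n p hnp
    obtain ⟨k, rfl⟩ := Nat.exists_eq_add_of_le hnp
    exact tele n k
  -- limit of g (x n)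
  have hbdd : BddBelow (Set.range fun n => g (x n)) := ⟨m, by rintro _ ⟨n, rfl⟩; exact hm _⟩
  set L := ⨅ n, g (x n) with hL
  have hgL : Filter.Tendsto (fun n => g (x n)) Filter.atTop (nhds L) :=
    tendsto_atTop_ciInf ganti' hbdd
  have hLle : ∀ n, L ≤ g (x n) := fun n => ciInf_le hbdd n
  -- x is Cauchy
  have hcauchy : CauchySeq x := by
    apply cauchySeq_of_le_tendsto_0 (fun n => (g (x n) - L) / δ)
    · intro n p N hn hp
      rcases le_total n p with h | h
      · have := tele' n p h
        have h2 : g (x n) ≤ g (x N) := ganti' hn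
        have h3 := hLle p
        rw [le_div_iff₀ hδ]
        nlinarith
      · have := tele' p n h
        have h2 : g (x p) ≤ g (x N) := ganti' hp
        have h3 := hLle n
        rw [dist_comm, le_div_iff₀ hδ]
        nlinarith
    · have : Filter.Tendsto (fun n => g (x n) - L) Filter.atTop (nhds (L - L)) :=
        hgL.sub tendsto_const_nhds
      simpa using this.div_const δ
  obtain ⟨v, hv⟩ := cauchySeq_tendsto_of_complete hcauchy
  -- g v ≤ L by lower semicontinuity
  have hgvL : g v ≤ L := by
    by_contra h
    push_neg at h
    set c := (L + g v) / 2 with hc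
    have hc1 : L < c := by rw [hc]; linarith
    have hc2 : c < g v := by rw [hc]; linarith
    have h1 := hv.eventually (hg v c hc2)
    have h2 : ∀ᶠ n in Filter.atTop, g (x n) < c := hgL.eventually (gt_mem_nhds hc1)
    obtain ⟨n, hn1, hn2⟩ := (h1.and h2).exists
    exact absurd hn1 (not_lt.2 hn2.le)
  -- v belongs to every S (x n)
  have hvS : ∀ n, g v + δ * dist (x n) v ≤ g (x n) := by
    intro n
    have hd : dist (x n) v ≤ (g (x n) - L) / δ := by
      have htd : Filter.Tendsto (fun p => dist (x n) (x p)) Filter.atTop (nhds (dist (x n) v)) :=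
        (Continuous.tendsto (continuous_const.dist continuous_id) v).comp hv
      refine le_of_tendsto htd ?_
      filter_upwards [Filter.eventually_ge_atTop n] with p hp
      have := tele' n p hp
      have h3 := hLle p
      rw [le_div_iff₀ hδ]
      nlinarith
    have := mul_le_mul_of_nonneg_left hd hδ.le
    rw [mul_div_cancel₀ _ hδ.ne'] at this
    linarith [hgvL]
  refine ⟨v, ?_, ?_⟩
  · have : g v ≤ g (x 0) := le_trans hgvL (hLle 0)
    exact this
  · intro y
    by_contra hcon
    push_neg at hcon
    have hySn : ∀ n, y ∈ S (x n) := by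
      intro n
      have hd : dist (x n) y ≤ dist (x n) v + dist v y := dist_triangle _ _ _
      have := mul_le_mul_of_nonneg_left hd hδ.le
      have h4 := hvS n
      simp only [hS, Set.mem_setOf_eq]
      nlinarith
    have hlim1 : Filter.Tendsto (fun n => 2 * g (x (n + 1))) Filter.atTop (nhds (2 * L)) :=
      (hgL.comp (Filter.tendsto_add_atTop_nat 1)).const_mul 2
    have hlim2 : Filter.Tendsto (fun n => g y + g (x n)) Filter.atTop (nhds (g y + L)) :=
      tendsto_const_nhds.add hgL
    have hLy : 2 * L ≤ g y + L :=
      le_of_tendsto_of_tendsto' hlim1 hlim2 (fun n => P2 n y (hySn n))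
    have : g v ≤ g y := le_trans hgvL (by linarith)
    nlinarith [dist_nonneg (x := v) (y := y), hδ]

/-- Hahn–Banach sandwich theorem: a convex extended-real function dominating a continuous
concave function, touching at `v`, admits a separating affine function. -/
theorem my_sandwich {f : X → EReal} (hbot : ∀ y, f y ≠ ⊥)
    (hconv : Convex ℝ {p : X × ℝ | f p.1 ≤ (p.2 : EReal)})
    {k : X → ℝ} (hk : Continuous k)
    (hkconc : ∀ x y : X, ∀ a b : ℝ, 0 ≤ a → 0 ≤ b → a + b = 1 →
      a * k x + b * k y ≤ k (a • x + b • y))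
    (hle : ∀ y, (k y : EReal) ≤ f y) {v : X} (hv : f v = (k v : EReal)) :
    ∃ x' : X →L[ℝ] ℝ, (∀ y, ((k v + x' (y - v) : ℝ) : EReal) ≤ f y) ∧
      ∀ y, k y ≤ k v + x' (y - v) := by
  classical
  set A : Set (X × ℝ) := {p | f p.1 ≤ (p.2 : EReal)} with hA
  set B : Set (X × ℝ) := {p | p.2 < k p.1} with hB
  have hBopen : IsOpen B := by
    have : B = {p : X × ℝ | p.2 - k p.1 < 0} := by ext p; simp [hB, sub_neg]
    rw [this]
    exact isOpen_lt (continuous_snd.sub (hk.comp continuous_fst)) continuous_const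
  have hBconv : Convex ℝ B := by
    rintro ⟨p1, p2⟩ hp ⟨q1, q2⟩ hq a b ha hb hab
    simp only [hB, Set.mem_setOf_eq] at hp hq
    show (a • (p1, p2) + b • (q1, q2)).2 < k (a • (p1, p2) + b • (q1, q2)).1
    simp only [Prod.smul_mk, Prod.mk_add_mk, smul_eq_mul]
    have h1 : a * p2 + b * q2 < a * k p1 + b * k q1 := by
      rcases eq_or_lt_of_le ha with rfl | ha'
      · have hb1 : b = 1 := by linarith
        subst hb1; simpa using hq
      · have h2 := mul_le_mul_of_nonneg_left hq.le hb
        nlinarith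
    exact lt_of_lt_of_le h1 (hkconc _ _ _ _ ha hb hab)
  have hdisj : Disjoint B A := by
    rw [Set.disjoint_left]
    rintro ⟨p1, p2⟩ hpB hpA
    simp only [hB, Set.mem_setOf_eq] at hpB
    simp only [hA, Set.mem_setOf_eq] at hpA
    have : (k p1 : EReal) ≤ (p2 : EReal) := le_trans (hle p1) hpA
    rw [EReal.coe_le_coe_iff] at this
    linarith
  obtain ⟨ψ, s, hψB, hψA⟩ := geometric_hahn_banach_open hBconv hBopen hconv hdisj
  -- decompose ψ (y, t) = G y + β t
  set G : X →L[ℝ] ℝ := ψ.comp (ContinuousLinearMap.inl ℝ X ℝ) with hG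
  set β : ℝ := ψ (0, 1) with hβ
  have hψ : ∀ y : X, ∀ t : ℝ, ψ (y, t) = G y + β * t := by
    intro y t
    have : (y, t) = (y, (0:ℝ)) + t • ((0:X), (1:ℝ)) := by
      simp [Prod.ext_iff]
    rw [this, map_add, map_smul]
    simp [hG, hβ, mul_comm]
  -- (v, k v) ∈ A
  have hvA : ((v, k v) : X × ℝ) ∈ A := by
    simp only [hA, Set.mem_setOf_eq]; rw [hv]
  have hsle : s ≤ G v + β * k v := by have := hψA _ hvA; rwa [hψ] at this
  -- (v, k v - η) ∈ B for η > 0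
  have hvB : ∀ η : ℝ, 0 < η → G v + β * (k v - η) < s := by
    intro η hη
    have : ((v, k v - η) : X × ℝ) ∈ B := by
      simp only [hB, Set.mem_setOf_eq]; linarith
    have := hψB _ this; rwa [hψ] at this
  -- β > 0
  have hβpos : 0 < β := by
    rcases lt_trichotomy β 0 with h | h | h
    · -- β < 0 : take η large
      have h1 := hvB (1 + (s - G v - β * k v) / β) (by
        have : (s - G v - β * k v) / β ≥ 0 := div_nonneg_of_nonpos (by linarith) h.le
        linarith)
      rw [mul_sub] at h1
      have h2 : β * ((s - G v - β * k v) / β) = s - G v - β * k v := mul_div_cancel₀ _ h.ne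
      nlinarith
    · exfalso
      have h1 := hvB 1 one_pos
      rw [h] at h1 hsle
      simp at h1 hsle
      linarith
    · exact h
  -- the subgradient
  set x' : X →L[ℝ] ℝ := (-β⁻¹) • G with hx'
  have hseq : s = G v + β * k v := by
    refine le_antisymm hsle ?_
    by_contra hcon
    push_neg at hcon
    have h1 := hvB ((G v + β * k v - s) / β) (div_pos (by linarith) hβpos)
    rw [mul_sub, mul_div_cancel₀ _ hβpos.ne'] at h1
    linarith
  refine ⟨x', ?_, ?_⟩
  · -- lower bound for f
    intro y
    rcases eq_or_ne (f y) ⊤ with htop | htop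
    · rw [htop]; exact le_top
    · have hyA : ((y, (f y).toReal) : X × ℝ) ∈ A := by
        simp only [hA, Set.mem_setOf_eq]
        rw [EReal.coe_toReal htop (hbot y)]
      have h1 := hψA _ hyA
      rw [hψ] at h1
      have h2 : k v + x' (y - v) ≤ (f y).toReal := by
        have hx'v : x' (y - v) = -β⁻¹ * (G y - G v) := by
          simp [hx', map_sub, mul_sub]
        rw [hx'v]
        rw [hseq] at h1
        have : G v + β * k v - G y ≤ β * (f y).toReal := by linarith
        have h3 := (div_le_iff₀' hβpos).mpr this
        rw [div_eq_inv_mul] at h3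
        have h4 : β⁻¹ * (G v + β * k v - G y) = k v + -β⁻¹ * (G y - G v) := by
          field_simp
          ring
        rw [h4] at h3
        linarith
      calc ((k v + x' (y - v) : ℝ) : EReal) ≤ ((f y).toReal : EReal) := by
            exact_mod_cast h2
        _ = f y := EReal.coe_toReal htop (hbot y)
  · -- upper bound for k
    intro y
    have h1 : ∀ η : ℝ, 0 < η → G y + β * (k y - η) < s := by
      intro η hη
      have : ((y, k y - η) : X × ℝ) ∈ B := by
        simp only [hB, Set.mem_setOf_eq]; linarith
      have := hψB _ this; rwa [hψ] at this
    have h2 : G y + β * k y ≤ s := by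
      by_contra hcon
      push_neg at hcon
      have h3 := h1 ((G y + β * k y - s) / β) (div_pos (by linarith) hβpos)
      rw [mul_sub, mul_div_cancel₀ _ hβpos.ne'] at h3
      linarith
    have hx'v : x' (y - v) = -β⁻¹ * (G y - G v) := by
      simp [hx', map_sub, mul_sub]
    have key : β * k y ≤ β * (k v + x' (y - v)) := by
      rw [hx'v]
      have h2' : G y + β * k y ≤ G v + β * k v := by rw [hseq] at h2; exact h2
      have h4 : β * (k v + -β⁻¹ * (G y - G v)) = β * k v - (G y - G v) := by
        field_simp
        ring
      rw [h4]
      linarith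
    exact le_of_mul_le_mul_left key hβpos

/-- The epigraph of an `ERealConvexOn` function is convex. -/
theorem epi_convex {φ : X → EReal} (hconv : ERealConvexOn φ) :
    Convex ℝ {p : X × ℝ | φ p.1 ≤ (p.2 : EReal)} := by
  rintro ⟨p1, p2⟩ hp ⟨q1, q2⟩ hq a b ha hb hab
  simp only [Set.mem_setOf_eq] at hp hq
  show φ (a • (p1, p2) + b • (q1, q2)).1 ≤ ((a • (p1, p2) + b • (q1, q2)).2 : EReal)
  simp only [Prod.smul_mk, Prod.mk_add_mk, smul_eq_mul]
  calc φ (a • p1 + b • q1) ≤ (a : EReal) * φ p1 + (b : EReal) * φ q1 :=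
        hconv _ _ _ _ ha hb hab
    _ ≤ (a : EReal) * (p2 : EReal) + (b : EReal) * (q2 : EReal) := by
        exact add_le_add (mul_le_mul_of_nonneg_left hp (EReal.coe_nonneg.mpr ha))
          (mul_le_mul_of_nonneg_left hq (EReal.coe_nonneg.mpr hb))
    _ = ((a * p2 + b * q2 : ℝ) : EReal) := by
        rw [EReal.coe_add, EReal.coe_mul, EReal.coe_mul]

/-- The epigraph of a lower semicontinuous function is closed. -/
theorem epi_closed {φ : X → EReal} (hlsc : LowerSemicontinuous φ) :
    IsClosed {p : X × ℝ | φ p.1 ≤ (p.2 : EReal)} := by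
  rw [← isOpen_compl_iff]
  have : {p : X × ℝ | φ p.1 ≤ (p.2 : EReal)}ᶜ =
      ⋃ q : ℚ, ({p : X × ℝ | p.2 < (q : ℝ)} ∩ {p : X × ℝ | ((q : ℝ) : EReal) < φ p.1}) := by
    ext ⟨p1, p2⟩
    simp only [Set.mem_compl_iff, Set.mem_setOf_eq, not_le, Set.mem_iUnion, Set.mem_inter_iff]
    constructor
    · intro h
      obtain ⟨q, hq1, hq2⟩ := EReal.lt_iff_exists_rat_btwn.mp h
      exact ⟨q, by exact_mod_cast hq1, hq2⟩
    · rintro ⟨q, hq1, hq2⟩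
      exact lt_trans (by exact_mod_cast hq1) hq2
  rw [this]
  refine isOpen_iUnion fun q => IsOpen.inter ?_ ?_
  · exact isOpen_lt continuous_snd continuous_const
  · exact (hlsc.isOpen_preimage _).preimage continuous_fst

/-- A proper convex lsc function admits a continuous affine minorant. -/
theorem affine_minorant {φ : X → EReal} (hbot : ∀ x, φ x ≠ ⊥) {x₀ : X} (hx₀ : φ x₀ ≠ ⊤)
    (hconv : ERealConvexOn φ) (hlsc : LowerSemicontinuous φ) :
    ∃ (w : X →L[ℝ] ℝ) (c : ℝ), ∀ x, ((w x + c : ℝ) : EReal) ≤ φ x := by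
  classical
  set A : Set (X × ℝ) := {p | φ p.1 ≤ (p.2 : EReal)} with hA
  have hAconv : Convex ℝ A := epi_convex hconv
  have hAclosed : IsClosed A := epi_closed hlsc
  set T : ℝ := (φ x₀).toReal with hT
  have hφx₀ : φ x₀ = (T : EReal) := (EReal.coe_toReal hx₀ (hbot x₀)).symm
  have hnotin : ((x₀, T - 1) : X × ℝ) ∉ A := by
    simp only [hA, Set.mem_setOf_eq, hφx₀, EReal.coe_le_coe_iff]
    push_neg
    linarith
  obtain ⟨ψ, u, hψ1, hψ2⟩ := geometric_hahn_banach_point_closed hAconv hAclosed hnotin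
  set G : X →L[ℝ] ℝ := ψ.comp (ContinuousLinearMap.inl ℝ X ℝ) with hG
  set β : ℝ := ψ (0, 1) with hβ
  have hψd : ∀ y : X, ∀ t : ℝ, ψ (y, t) = G y + β * t := by
    intro y t
    have : ((y, t) : X × ℝ) = (y, (0:ℝ)) + t • ((0:X), (1:ℝ)) := by simp [Prod.ext_iff]
    rw [this, map_add, map_smul]
    simp [hG, hβ, mul_comm]
  have hmem : ∀ t : ℝ, T ≤ t → u < G x₀ + β * t := by
    intro t ht
    have : ((x₀, t) : X × ℝ) ∈ A := by
      simp only [hA, Set.mem_setOf_eq, hφx₀]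
      exact_mod_cast ht
    have := hψ2 _ this
    rwa [hψd] at this
  have hψ1' : G x₀ + β * (T - 1) < u := by rw [hψd] at hψ1; exact hψ1
  have hβpos : 0 < β := by
    rcases lt_trichotomy β 0 with h | h | h
    · exfalso
      set t : ℝ := max T ((u - G x₀ - 1) / β) with ht
      have h1 : t ≥ (u - G x₀ - 1) / β := le_max_right _ _
      have h2 : β * t ≤ u - G x₀ - 1 := by
        rw [ge_iff_le, div_le_iff_of_neg h] at h1
        linarith [h1]
      have := hmem t (le_max_left _ _)
      linarith
    · exfalso
      rw [h] at hψ1'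
      have := hmem T le_rfl
      rw [h] at this
      simp at this hψ1'
      linarith
    · exact h
  refine ⟨(-β⁻¹) • G, u / β, ?_⟩
  intro x
  rcases eq_or_ne (φ x) ⊤ with htop | htop
  · rw [htop]; exact le_top
  · have hx : ((x, (φ x).toReal) : X × ℝ) ∈ A := by
      simp only [hA, Set.mem_setOf_eq]
      rw [EReal.coe_toReal htop (hbot x)]
    have h1 := hψ2 _ hx
    rw [hψd] at h1
    have h2 : (-β⁻¹) • G x + u / β ≤ (φ x).toReal := by
      have h3 : u - G x ≤ β * (φ x).toReal := by linarith
      rw [← div_le_iff₀' hβpos] at h3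
      have h4 : (u - G x) / β = (-β⁻¹ : ℝ) * G x + u / β := by
        field_simp
        ring
      rw [h4] at h3
      simpa using h3
    calc ((((-β⁻¹) • G) x + u / β : ℝ) : EReal) ≤ (((φ x).toReal : ℝ) : EReal) := by
          exact_mod_cast h2
      _ = φ x := EReal.coe_toReal htop (hbot x)

/-- An operator norm bound from a one-sided bound. -/
theorem norm_le_of_forall_le {e : X →L[ℝ] ℝ} {ε : ℝ} (hε : 0 ≤ ε)
    (h : ∀ w, e w ≤ ε * ‖w‖) : ‖e‖ ≤ ε := by
  refine ContinuousLinearMap.opNorm_le_bound e hε fun w => ?_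
  rw [Real.norm_eq_abs, abs_le]
  constructor
  · have := h (-w)
    rw [map_neg, norm_neg] at this
    linarith
  · exact h w

/-- A subgradient of `y ↦ ‖y‖ ^ 2 / 2` at `v` belongs to the duality map at `v`. -/
theorem mem_dualityMap_of_subgrad {v : X} {y' : X →L[ℝ] ℝ}
    (h : ∀ y, y' (y - v) ≤ (‖y‖ ^ 2 - ‖v‖ ^ 2) / 2) : y' ∈ dualityMap v := by
  have hup : ∀ s : ℝ, 0 < s → y' v ≤ ‖v‖ ^ 2 + s * ‖v‖ ^ 2 / 2 := by
    intro s hs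
    have h1 := h ((1 + s) • v)
    rw [show (1 + s) • v - v = s • v by module, map_smul, norm_smul] at h1
    simp only [smul_eq_mul, Real.norm_eq_abs] at h1
    have h2 : (|1 + s| * ‖v‖) ^ 2 = (1 + s) ^ 2 * ‖v‖ ^ 2 := by rw [mul_pow, sq_abs]
    rw [h2] at h1
    nlinarith [h1, hs]
  have hlo : ∀ s : ℝ, 0 < s → ‖v‖ ^ 2 - s * ‖v‖ ^ 2 / 2 ≤ y' v := by
    intro s hs
    have h1 := h ((1 - s) • v)
    rw [show (1 - s) • v - v = (-s) • v by module, map_smul, norm_smul] at h1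
    simp only [smul_eq_mul, Real.norm_eq_abs] at h1
    have h2 : (|1 - s| * ‖v‖) ^ 2 = (1 - s) ^ 2 * ‖v‖ ^ 2 := by rw [mul_pow, sq_abs]
    rw [h2] at h1
    nlinarith [h1, hs]
  have heq : y' v = ‖v‖ ^ 2 := by
    have hv2 : (0:ℝ) ≤ ‖v‖ ^ 2 := sq_nonneg _
    refine le_antisymm (le_of_forall_pos_le_add fun ε hε => ?_)
      (le_of_forall_pos_le_add fun ε hε => ?_)
    · have hs : 0 < 2 * ε / (‖v‖ ^ 2 + 1) := by positivity
      have := hup _ hs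
      have hb : 2 * ε / (‖v‖ ^ 2 + 1) * ‖v‖ ^ 2 / 2 ≤ ε := by
        rw [div_mul_eq_mul_div, div_div, div_le_iff₀ (by positivity)]
        nlinarith
      linarith
    · have hs : 0 < 2 * ε / (‖v‖ ^ 2 + 1) := by positivity
      have := hlo _ hs
      have hb : 2 * ε / (‖v‖ ^ 2 + 1) * ‖v‖ ^ 2 / 2 ≤ ε := by
        rw [div_mul_eq_mul_div, div_div, div_le_iff₀ (by positivity)]
        nlinarith
      linarith
  have hnle : ‖y'‖ ≤ ‖v‖ := by
    refine norm_le_of_forall_le (norm_nonneg v) fun w => ?_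
    refine le_of_forall_pos_le_add fun ε hε => ?_
    have hs : 0 < 2 * ε / (‖w‖ ^ 2 + 1) := by positivity
    set s := 2 * ε / (‖w‖ ^ 2 + 1) with hsdef
    have h1 := h (v + s • w)
    rw [show v + s • w - v = s • w by module, map_smul] at h1
    simp only [smul_eq_mul] at h1
    have h2 : ‖v + s • w‖ ≤ ‖v‖ + s * ‖w‖ := by
      calc ‖v + s • w‖ ≤ ‖v‖ + ‖s • w‖ := norm_add_le _ _
        _ = ‖v‖ + s * ‖w‖ := by rw [norm_smul, Real.norm_eq_abs, abs_of_pos hs]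
    have h3 : ‖v + s • w‖ ^ 2 ≤ (‖v‖ + s * ‖w‖) ^ 2 := by
      have := norm_nonneg (v + s • w)
      nlinarith
    have h4 : s * y' w ≤ s * (‖v‖ * ‖w‖) + s ^ 2 * ‖w‖ ^ 2 / 2 := by nlinarith
    have h5 : y' w ≤ ‖v‖ * ‖w‖ + s * ‖w‖ ^ 2 / 2 := by nlinarith
    have hb : s * ‖w‖ ^ 2 / 2 ≤ ε := by
      rw [hsdef, div_mul_eq_mul_div, div_div, div_le_iff₀ (by positivity)]
      nlinarith [sq_nonneg ‖w‖]
    linarith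
  have hnge : ‖v‖ ≤ ‖y'‖ := by
    rcases eq_or_lt_of_le (norm_nonneg v) with h0 | h0
    · rw [← h0]; exact norm_nonneg _
    · have h2 : y' v ≤ ‖y'‖ * ‖v‖ :=
        (ContinuousLinearMap.le_opNorm y' v).trans'
          ((le_abs_self _).trans_eq (Real.norm_eq_abs _).symm)
      rw [heq] at h2
      nlinarith
  refine ⟨heq, ?_⟩
  have : ‖y'‖ = ‖v‖ := le_antisymm hnle hnge
  rw [this]

/-- Adding a continuous real function preserves lower semicontinuity. -/
theorem lsc_add_cont {φ : X → EReal} (hbot : ∀ x, φ x ≠ ⊥) (hlsc : LowerSemicontinuous φ)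
    {h₀ : X → ℝ} (hh : Continuous h₀) :
    LowerSemicontinuous fun y => φ y + ((h₀ y : ℝ) : EReal) := by
  intro x c hc
  replace hc : c < φ x + ((h₀ x : ℝ) : EReal) := hc
  induction c with
  | bot =>
    filter_upwards with y
    exact bot_lt_iff_ne_bot.mpr (by simp [EReal.add_eq_bot_iff, hbot y])
  | coe r =>
    -- find A, ρ with (A : EReal) < φ x, 0 < ρ, A + (h₀ x - ρ) = r
    obtain ⟨A, ρ, hA, hρ, hsum⟩ :
        ∃ A ρ : ℝ, ((A : ℝ) : EReal) < φ x ∧ 0 < ρ ∧ A + (h₀ x - ρ) = r := by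
      rcases eq_or_ne (φ x) ⊤ with htop | htop
      · exact ⟨r - h₀ x + 1, 1, by rw [htop]; exact EReal.coe_lt_top _, one_pos, by ring⟩
      · have hreal : φ x = ((φ x).toReal : EReal) := (EReal.coe_toReal htop (hbot x)).symm
        have h1 : r < (φ x).toReal + h₀ x := by
          have : ((r : ℝ) : EReal) < (((φ x).toReal + h₀ x : ℝ) : EReal) := by
            rw [EReal.coe_add]
            rw [hreal] at hc
            exact hc
          exact_mod_cast this
        refine ⟨r - h₀ x + ((φ x).toReal + h₀ x - r) / 2,
          ((φ x).toReal + h₀ x - r) / 2, ?_, by linarith, by ring⟩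
        rw [hreal, EReal.coe_lt_coe_iff]
        simp only [EReal.toReal_coe]
        linarith
    have E1 := hlsc x _ hA
    have E2 : ∀ᶠ y in nhds x, h₀ x - ρ < h₀ y :=
      (hh.tendsto x).eventually (eventually_gt_nhds (by linarith))
    filter_upwards [E1, E2] with y hy1 hy2
    have := EReal.add_lt_add hy1 (EReal.coe_lt_coe_iff.mpr hy2)
    rw [← EReal.coe_add, hsum] at this
    exact this
  | top => exact absurd hc (not_top_lt)

end EkelandSandwich


set_option maxHeartbeats 1600000 in
/-- the closure of the range of `J_X + λ∂φ` is all of `X*`. -/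
theorem closure_range_eq (φ : X → EReal) (hproper : ProperFn φ)
    (hconv : ERealConvexOn φ) (hlsc : LowerSemicontinuous φ) :
    ∀ lam : ℝ, 0 < lam → ∀ z' : X →L[ℝ] ℝ, ∀ ε : ℝ, 0 < ε →
      ∃ (x : X) (y' x' : X →L[ℝ] ℝ),
        y' ∈ dualityMap x ∧ (x, x') ∈ subdiff φ ∧ ‖z' - (y' + lam • x')‖ ≤ ε := by
  intro lam hlam z' ε hε
  obtain ⟨hbot, x₀, hx₀⟩ := hproper
  obtain ⟨w, c, hwc⟩ := affine_minorant hbot hx₀ hconv hlsc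
  set δ : ℝ := ε / lam with hδdef
  have hδ : 0 < δ := div_pos hε hlam
  set h₀ : X → ℝ := fun y => (‖y‖ ^ 2 / 2 - z' y) / lam with hh₀def
  have hh₀ : Continuous h₀ :=
    (((continuous_norm.pow 2).div_const 2).sub z'.continuous).div_const lam
  set F : X → EReal := fun y => φ y + ((h₀ y : ℝ) : EReal) with hFdef
  have hFbot : ∀ y, F y ≠ ⊥ := fun y => by
    simp [hFdef, EReal.add_eq_bot_iff, hbot y]
  have hFlsc : LowerSemicontinuous F := lsc_add_cont hbot hlsc hh₀
  have hFtop : ∀ y, φ y = ⊤ → F y = ⊤ := fun y h => by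
    simp [hFdef, h]
  have hFrepr : ∀ y, φ y ≠ ⊤ → F y = (((φ y).toReal + h₀ y : ℝ) : EReal) := by
    intro y hy
    rw [hFdef]
    show φ y + ((h₀ y : ℝ) : EReal) = _
    rw [show φ y = (((φ y).toReal : ℝ) : EReal) from (EReal.coe_toReal hy (hbot y)).symm,
      ← EReal.coe_add]
    simp
  have hFrealtop : ∀ y, φ y ≠ ⊤ → F y ≠ ⊤ := fun y hy => by
    rw [hFrepr y hy]; exact EReal.coe_ne_top _
  have hFtoReal : ∀ y, φ y ≠ ⊤ → (F y).toReal = (φ y).toReal + h₀ y := fun y hy => by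
    rw [hFrepr y hy]; exact EReal.toReal_coe _
  -- lower bound for F
  set K : ℝ := ‖z'‖ / lam + ‖w‖ with hKdef
  set m : ℝ := c - lam * K ^ 2 / 2 with hmdef
  have hFm : ∀ y, ((m : ℝ) : EReal) ≤ F y := by
    intro y
    rcases eq_or_ne (φ y) ⊤ with htop | htop
    · rw [hFtop y htop]; exact le_top
    · rw [hFrepr y htop, EReal.coe_le_coe_iff]
      have hwy : w y + c ≤ (φ y).toReal := by
        have := hwc y
        rw [show φ y = (((φ y).toReal : ℝ) : EReal) from (EReal.coe_toReal htop (hbot y)).symm]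
          at this
        exact_mod_cast this
      have hwb : |w y| ≤ ‖w‖ * ‖y‖ := by
        have := w.le_opNorm y
        rwa [Real.norm_eq_abs] at this
      have hzb : |z' y| ≤ ‖z'‖ * ‖y‖ := by
        have := z'.le_opNorm y
        rwa [Real.norm_eq_abs] at this
      rw [abs_le] at hwb hzb
      have hexp : lam * ((φ y).toReal + (‖y‖ ^ 2 / 2 - z' y) / lam) =
          lam * (φ y).toReal + ‖y‖ ^ 2 / 2 - z' y := by
        field_simp
        ring
      have key : lam * m ≤ lam * ((φ y).toReal + (‖y‖ ^ 2 / 2 - z' y) / lam) := by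
        rw [hexp, hmdef, hKdef]
        have h1 : lam * (w y + c) ≤ lam * (φ y).toReal :=
          mul_le_mul_of_nonneg_left hwy hlam.le
        have hK : lam * (‖z'‖ / lam + ‖w‖) = ‖z'‖ + lam * ‖w‖ := by
          field_simp
        nlinarith [sq_nonneg (‖y‖ - lam * (‖z'‖ / lam + ‖w‖)), hwb.1, hzb.2,
          mul_le_mul_of_nonneg_left hwb.1 hlam.le, norm_nonneg y, hlam]
      have h9 := (mul_le_mul_iff_right₀ hlam).mp key
      simpa [hh₀def] using h9
  -- truncation
  set C : ℝ := (F x₀).toReal + 1 with hCdef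
  have hFx₀top : F x₀ ≠ ⊤ := hFrealtop x₀ hx₀
  have hFx₀lt : F x₀ < ((C : ℝ) : EReal) := by
    rw [show F x₀ = (((F x₀).toReal : ℝ) : EReal) from (EReal.coe_toReal hFx₀top (hFbot x₀)).symm,
      EReal.coe_lt_coe_iff, hCdef]
    linarith
  set g : X → ℝ := fun y => (min (F y) ((C : ℝ) : EReal)).toReal with hgdef
  have hminbot : ∀ y, min (F y) ((C : ℝ) : EReal) ≠ ⊥ := by
    intro y
    rcases min_cases (F y) ((C : ℝ) : EReal) with ⟨h, _⟩ | ⟨h, _⟩ <;> rw [h]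
    · exact hFbot y
    · exact EReal.coe_ne_bot _
  have hmintop : ∀ y, min (F y) ((C : ℝ) : EReal) ≠ ⊤ := by
    intro y
    exact ne_top_of_le_ne_top (EReal.coe_ne_top C) (min_le_right _ _)
  have hmincoe : ∀ y, min (F y) ((C : ℝ) : EReal) = ((g y : ℝ) : EReal) := fun y =>
    (EReal.coe_toReal (hmintop y) (hminbot y)).symm
  have hglsc : LowerSemicontinuous g := by
    intro x t ht
    replace ht : t < g x := ht
    have h1 : ((t : ℝ) : EReal) < min (F x) ((C : ℝ) : EReal) := by
      rw [hmincoe x, EReal.coe_lt_coe_iff]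
      exact ht
    have h2 : ((t : ℝ) : EReal) < F x := h1.trans_le (min_le_left _ _)
    have h3 : t < C := by
      have := h1.trans_le (min_le_right _ _)
      exact_mod_cast this
    filter_upwards [hFlsc x _ h2] with y hy
    show t < g y
    have h4 : ((t : ℝ) : EReal) < min (F y) ((C : ℝ) : EReal) :=
      lt_min hy (EReal.coe_lt_coe_iff.mpr h3)
    rw [hmincoe y, EReal.coe_lt_coe_iff] at h4
    exact h4
  have hgm : ∀ y, min m C ≤ g y := by
    intro y
    have h1 : ((min m C : ℝ) : EReal) ≤ min (F y) ((C : ℝ) : EReal) := by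
      apply le_min
      · exact le_trans (EReal.coe_le_coe_iff.mpr (min_le_left m C)) (hFm y)
      · exact EReal.coe_le_coe_iff.mpr (min_le_right m C)
    rw [hmincoe y, EReal.coe_le_coe_iff] at h1
    exact h1
  -- Ekeland
  obtain ⟨v, hvle, hvmin⟩ := my_ekeland hglsc hgm hδ x₀
  have hgx₀ : g x₀ = (F x₀).toReal := by
    rw [hgdef]
    show (min (F x₀) ((C : ℝ) : EReal)).toReal = _
    rw [min_eq_left hFx₀lt.le]
  have hFvlt : F v < ((C : ℝ) : EReal) := by
    by_contra hcon
    push_neg at hcon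
    have : g v = C := by
      rw [hgdef]
      show (min (F v) ((C : ℝ) : EReal)).toReal = C
      rw [min_eq_right hcon, EReal.toReal_coe]
    rw [this, hgx₀] at hvle
    rw [hCdef] at hvle
    linarith
  have hφv : φ v ≠ ⊤ := by
    intro h
    rw [hFtop v h] at hFvlt
    exact absurd hFvlt (not_top_lt)
  have hgv : g v = (φ v).toReal + h₀ v := by
    rw [hgdef]
    show (min (F v) ((C : ℝ) : EReal)).toReal = _
    rw [min_eq_left hFvlt.le, hFtoReal v hφv]
  -- key minimality in real terms
  have Kmin : ∀ y, φ y ≠ ⊤ →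
      (φ v).toReal + h₀ v ≤ (φ y).toReal + h₀ y + δ * ‖y - v‖ := by
    intro y hy
    have h1 := hvmin y
    rw [hgv, dist_eq_norm, norm_sub_rev] at h1
    rcases lt_or_ge (F y) (((C : ℝ)) : EReal) with hFy | hFy
    · have hgy : g y = (φ y).toReal + h₀ y := by
        rw [hgdef]
        show (min (F y) ((C : ℝ) : EReal)).toReal = _
        rw [min_eq_left hFy.le, hFtoReal y hy]
      rw [hgy] at h1
      exact h1
    · have hgy : g y = C := by
        rw [hgdef]
        show (min (F y) ((C : ℝ) : EReal)).toReal = C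
        rw [min_eq_right hFy, EReal.toReal_coe]
      have hCle : C ≤ (F y).toReal := by
        have := EReal.toReal_le_toReal hFy (EReal.coe_ne_bot C) (hFrealtop y hy)
        rwa [EReal.toReal_coe] at this
      rw [hFtoReal y hy] at hCle
      rw [hgy] at h1
      linarith
  -- first sandwich : subgradient of φ at v
  set q : X → ℝ := fun y => h₀ y + δ * ‖y - v‖ with hqdef
  have hqv : q v = h₀ v := by simp [hqdef]
  set k : X → ℝ := fun y => (φ v).toReal + q v - q y with hkdef
  have hk : Continuous k := by
    apply continuous_const.sub
    exact hh₀.add (continuous_const.mul ((continuous_id.sub continuous_const).norm))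
  have hqcvx : ∀ x y : X, ∀ a b : ℝ, 0 ≤ a → 0 ≤ b → a + b = 1 →
      q (a • x + b • y) ≤ a * q x + b * q y := by
    intro x y a b ha hb hab
    have h1 := normsq_cvx x y a b ha hb hab
    have h2 := normsub_cvx v x y a b ha hb hab
    have h3 : z' (a • x + b • y) = a * z' x + b * z' y := by
      rw [map_add, map_smul, map_smul]; simp
    have hdiv : (‖a • x + b • y‖ ^ 2 / 2 - z' (a • x + b • y)) / lam ≤
        (a * (‖x‖ ^ 2 / 2 - z' x) + b * (‖y‖ ^ 2 / 2 - z' y)) / lam := by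
      apply div_le_div_of_nonneg_right ?_ hlam.le
      rw [h3]
      nlinarith [h1]
    have h4 : (a * (‖x‖ ^ 2 / 2 - z' x) + b * (‖y‖ ^ 2 / 2 - z' y)) / lam =
        a * ((‖x‖ ^ 2 / 2 - z' x) / lam) + b * ((‖y‖ ^ 2 / 2 - z' y) / lam) := by
      ring
    have h5 := mul_le_mul_of_nonneg_left h2 hδ.le
    simp only [hqdef, hh₀def]
    rw [h4] at hdiv
    nlinarith [hdiv, h5]
  have hkconc : ∀ x y : X, ∀ a b : ℝ, 0 ≤ a → 0 ≤ b → a + b = 1 →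
      a * k x + b * k y ≤ k (a • x + b • y) := by
    intro x y a b ha hb hab
    have hq1 := hqcvx x y a b ha hb hab
    have hco : a * ((φ v).toReal + q v) + b * ((φ v).toReal + q v) = (φ v).toReal + q v := by
      rw [← add_mul, hab, one_mul]
    simp only [hkdef]
    nlinarith [hq1, hco]
  have hle1 : ∀ y, ((k y : ℝ) : EReal) ≤ φ y := by
    intro y
    rcases eq_or_ne (φ y) ⊤ with htop | htop
    · rw [htop]; exact le_top
    · rw [show φ y = (((φ y).toReal : ℝ) : EReal) from (EReal.coe_toReal htop (hbot y)).symm,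
        EReal.coe_le_coe_iff]
      have := Kmin y htop
      simp only [hkdef, hqdef, hqv]
      simp only [hqdef] at hqv
      linarith [this]
  have hveq1 : φ v = ((k v : ℝ) : EReal) := by
    have hkv : k v = (φ v).toReal := by simp [hkdef]
    rw [hkv]
    exact (EReal.coe_toReal hφv (hbot v)).symm
  obtain ⟨x'₁, hs1, hs2⟩ := my_sandwich hbot (epi_convex hconv) hk hkconc hle1 hveq1
  have hsubdiff : (v, x'₁) ∈ subdiff φ := by
    intro y
    show ((x'₁ (y - v) : ℝ) : EReal) + φ v ≤ φ y
    rw [hveq1, ← EReal.coe_add]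
    have := hs1 y
    rw [show x'₁ (y - v) + k v = k v + x'₁ (y - v) by ring]
    exact this
  -- inequality for u := z' - lam • x'₁
  set u : X →L[ℝ] ℝ := z' - lam • x'₁ with hudef
  have hlamh : ∀ y, lam * h₀ y = ‖y‖ ^ 2 / 2 - z' y := by
    intro y
    simp only [hh₀def]
    field_simp
  have hlamδ : lam * δ = ε := by
    rw [hδdef]
    field_simp
  have hu : ∀ y, u (y - v) ≤ (‖y‖ ^ 2 - ‖v‖ ^ 2) / 2 + ε * ‖y - v‖ := by
    intro y
    have h1 := hs2 y
    simp only [hkdef, hqdef] at h1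
    have h2 : h₀ v - h₀ y - δ * ‖y - v‖ ≤ x'₁ (y - v) := by
      have hvv : ‖v - v‖ = 0 := by simp
      rw [hvv] at h1
      linarith
    have h3 := mul_le_mul_of_nonneg_left h2 hlam.le
    have h4 : u (y - v) = z' (y - v) - lam * x'₁ (y - v) := by
      simp [hudef, ContinuousLinearMap.sub_apply, ContinuousLinearMap.smul_apply, smul_eq_mul]
    have h5 : z' (y - v) = z' y - z' v := by rw [map_sub]
    have h6 := hlamh y
    have h7 := hlamh v
    have h8 : lam * (h₀ v - h₀ y - δ * ‖y - v‖) =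
        lam * h₀ v - lam * h₀ y - lam * δ * ‖y - v‖ := by ring
    rw [h8, hlamδ, h6, h7] at h3
    rw [h4, h5]
    linarith
  -- second sandwich : splitting u into duality map part and small part
  set f₂ : X → EReal := fun y => ((‖y‖ ^ 2 / 2 : ℝ) : EReal) with hf₂def
  have hbot₂ : ∀ y, f₂ y ≠ ⊥ := fun y => EReal.coe_ne_bot _
  have hconv₂ : Convex ℝ {p : X × ℝ | f₂ p.1 ≤ (p.2 : EReal)} := by
    rintro ⟨p1, p2⟩ hp ⟨q1, q2⟩ hq a b ha hb hab
    simp only [Set.mem_setOf_eq, hf₂def, EReal.coe_le_coe_iff] at hp hq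
    show f₂ (a • (p1, p2) + b • (q1, q2)).1 ≤ (((a • (p1, p2) + b • (q1, q2)).2 : ℝ) : EReal)
    simp only [Prod.smul_mk, Prod.mk_add_mk, smul_eq_mul, hf₂def, EReal.coe_le_coe_iff]
    have := normsq_cvx p1 q1 a b ha hb hab
    nlinarith [mul_le_mul_of_nonneg_left hp ha, mul_le_mul_of_nonneg_left hq hb]
  set k₂ : X → ℝ := fun y => ‖v‖ ^ 2 / 2 + u (y - v) - ε * ‖y - v‖ with hk₂def
  have hk₂ : Continuous k₂ := by
    apply Continuous.sub
    · exact continuous_const.add (u.continuous.comp (continuous_id.sub continuous_const))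
    · exact continuous_const.mul ((continuous_id.sub continuous_const).norm)
  have hk₂conc : ∀ x y : X, ∀ a b : ℝ, 0 ≤ a → 0 ≤ b → a + b = 1 →
      a * k₂ x + b * k₂ y ≤ k₂ (a • x + b • y) := by
    intro x y a b ha hb hab
    have h2 := normsub_cvx v x y a b ha hb hab
    have h3 : u ((a • x + b • y) - v) = a * u (x - v) + b * u (y - v) := by
      have : (a • x + b • y) - v = a • (x - v) + b • (y - v) := by
        rw [smul_sub, smul_sub]
        rw [show a • x - a • v + (b • y - b • v) = a • x + b • y - (a • v + b • v) by abel]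
        congr 1
        rw [← add_smul, hab, one_smul]
      rw [this, map_add, map_smul, map_smul]; simp
    have hco2 : a * (‖v‖ ^ 2 / 2) + b * (‖v‖ ^ 2 / 2) = ‖v‖ ^ 2 / 2 := by
      rw [← add_mul, hab, one_mul]
    simp only [hk₂def]
    rw [h3]
    nlinarith [mul_le_mul_of_nonneg_left h2 hε.le, hco2]
  have hle₂ : ∀ y, ((k₂ y : ℝ) : EReal) ≤ f₂ y := by
    intro y
    simp only [hf₂def, EReal.coe_le_coe_iff, hk₂def]
    have := hu y
    linarith
  have hveq₂ : f₂ v = ((k₂ v : ℝ) : EReal) := by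
    simp [hf₂def, hk₂def]
  obtain ⟨x'₂, ht1, ht2⟩ := my_sandwich hbot₂ hconv₂ hk₂ hk₂conc hle₂ hveq₂
  have hdual : x'₂ ∈ dualityMap v := by
    apply mem_dualityMap_of_subgrad
    intro y
    have := ht1 y
    simp only [hf₂def, EReal.coe_le_coe_iff, hk₂def] at this
    have hvv : ‖v - v‖ = 0 := by simp
    rw [hvv] at this
    simp at this
    simp only [map_sub]
    linarith
  have hnorm : ‖u - x'₂‖ ≤ ε := by
    apply norm_le_of_forall_le hε.le
    intro w'
    have := ht2 (v + w')
    simp only [hk₂def] at this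
    have hvv : ‖v - v‖ = 0 := by simp
    have hw : v + w' - v = w' := by abel
    rw [hw, hvv] at this
    simp only [ContinuousLinearMap.sub_apply]
    simp at this
    linarith
  refine ⟨v, x'₂, x'₁, hdual, hsubdiff, ?_⟩
  have : z' - (x'₂ + lam • x'₁) = u - x'₂ := by
    rw [hudef]; abel
  rw [this]
  exact hnorm
end
end
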